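/- Courant–Fischer for quaternionic Hermitian matrices: for each k, the k-th smallest eigenvalue t_k of a Hermitian quaternionic matrix S equals the minimum, over all k-dimensional right ℍ-subspaces E of ℍⁿ, of the maximum of R(S,v) over nonzero v ∈ E. -/

import Mathlib

open Quaternion Matrix MulOpposite

noncomputable def opBasis (n : ℕ) : Module.Basis (Fin n) ℍ[ℝ]ᵐᵒᵖ (Fin n → ℍ[ℝ]) := by
  refine Module.Basis.mk (v := fun i => Pi.single i (1:ℍ[ℝ])) ?_ ?_
  · rw [Fintype.linearIndependent_iff]
    intro g hg i
    have h := congrFun hg i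
    simp only [Finset.sum_apply, Pi.smul_apply, Pi.single_apply, Pi.zero_apply,
      smul_ite, smul_zero, Finset.sum_ite_eq, Finset.mem_univ, if_true] at h
    have h2 : (1:ℍ[ℝ]) * unop (g i) = 0 := h
    simpa using h2
  · rintro v -
    rw [Submodule.mem_span_range_iff_exists_fun]
    refine ⟨fun i => op (v i), funext fun l => ?_⟩
    simp only [Finset.sum_apply, Pi.smul_apply, Pi.single_apply,
      smul_ite, smul_zero, Finset.sum_ite_eq, Finset.mem_univ, if_true]
    exact one_mul _

lemma sum_dot {n m : ℕ} (w : Fin m → Fin n → ℍ[ℝ]) (c d : Fin m → ℍ[ℝ]) :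
    star (fun l => ∑ i, w i l * c i) ⬝ᵥ (fun j => ∑ j', w j' j * d j')
      = ∑ i, ∑ j, star (c i) * ((star (w i) ⬝ᵥ w j) * d j) := by
  simp only [dotProduct, Pi.star_apply, star_sum, StarMul.star_mul, Finset.sum_mul_sum,
    Finset.mul_sum, Finset.sum_mul, mul_assoc]
  rw [Finset.sum_comm]
  exact (Finset.sum_congr rfl fun j _ => Finset.sum_comm).trans Finset.sum_comm

lemma star_self_eq (c : ℍ[ℝ]) : star c * c = ((‖c‖^2 : ℝ) : ℍ[ℝ]) := by
  rw [Quaternion.star_mul_self, sq, ← Quaternion.normSq_eq_norm_mul_self]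

lemma star_coe_mul (r : ℝ) (c : ℍ[ℝ]) : star c * ((r:ℍ[ℝ]) * c) = ((r * ‖c‖^2 : ℝ) : ℍ[ℝ]) := by
  rw [(Quaternion.coe_commute r _).eq, ← mul_assoc, star_self_eq]
  norm_cast
  ring_nf

lemma quat_coe_sum {ι : Type*} (s : Finset ι) (f : ι → ℝ) :
    ((∑ i ∈ s, f i : ℝ) : ℍ[ℝ]) = ∑ i ∈ s, ((f i : ℝ) : ℍ[ℝ]) := by
  rw [← Quaternion.algebraMap_def]; exact map_sum _ _ _

lemma dot_self_eq {n : ℕ} (v : Fin n → ℍ[ℝ]) :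
    (star v ⬝ᵥ v) = ((∑ l, ‖v l‖^2 : ℝ) : ℍ[ℝ]) := by
  rw [quat_coe_sum]
  simp only [dotProduct, Pi.star_apply]
  exact Finset.sum_congr rfl fun l _ => star_self_eq _

section core
variable {n : ℕ} (S : Matrix (Fin n) (Fin n) ℍ[ℝ]) (t : Fin n → ℝ) (u : Fin n → Fin n → ℍ[ℝ])
  (horth : ∀ i j, star (u i) ⬝ᵥ u j = if i = j then 1 else 0)
  (heig : ∀ j, S.mulVec (u j) = fun l => u j l * (t j : ℍ[ℝ]))

include horth in
lemma dot_comb {m : ℕ} (f : Fin m → Fin n) (hf : Function.Injective f) (c d : Fin m → ℍ[ℝ]) :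
    star (fun l => ∑ i, u (f i) l * c i) ⬝ᵥ (fun l => ∑ j, u (f j) l * d j)
      = ∑ i, star (c i) * d i := by
  rw [sum_dot]
  have : ∀ i j : Fin m, star (u (f i)) ⬝ᵥ u (f j) = if i = j then 1 else 0 := by
    intro i j; rw [horth]; simp [hf.eq_iff]
  simp only [this, ite_mul, one_mul, zero_mul, mul_ite, mul_zero,
    Finset.sum_ite_eq, Finset.mem_univ, if_true]

include heig in
lemma mulVec_comb {m : ℕ} (f : Fin m → Fin n) (c : Fin m → ℍ[ℝ]) :
    S.mulVec (fun l => ∑ i, u (f i) l * c i)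
      = fun l => ∑ j, u (f j) l * ((t (f j) : ℍ[ℝ]) * c j) := by
  funext l
  simp only [mulVec, dotProduct, Finset.mul_sum]
  rw [Finset.sum_comm]
  refine Finset.sum_congr rfl fun j _ => ?_
  have h1 : ∑ m', S l m' * (u (f j) m' * c j) = (∑ m', S l m' * u (f j) m') * c j := by
    rw [Finset.sum_mul]; simp [mul_assoc]
  have h2 : (∑ m', S l m' * u (f j) m') = u (f j) l * (t (f j) : ℍ[ℝ]) :=
    congrFun (heig (f j)) l
  rw [h1, h2, mul_assoc]

include horth in
lemma normsum_comb {m : ℕ} (f : Fin m → Fin n) (hf : Function.Injective f) (c : Fin m → ℍ[ℝ]) :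
    (∑ l, ‖∑ i, u (f i) l * c i‖^2) = ∑ i, ‖c i‖^2 := by
  have h := dot_self_eq (fun l => ∑ i, u (f i) l * c i)
  rw [dot_comb u horth f hf c c] at h
  have h2 : ∑ i, star (c i) * c i = ((∑ i, ‖c i‖^2 : ℝ) : ℍ[ℝ]) := by
    rw [quat_coe_sum]; exact Finset.sum_congr rfl fun i _ => star_self_eq _
  rw [h2] at h
  exact Quaternion.coe_injective h.symm

include horth heig in
lemma num_comb {m : ℕ} (f : Fin m → Fin n) (hf : Function.Injective f) (c : Fin m → ℍ[ℝ]) :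
    (star (fun l => ∑ i, u (f i) l * c i) ⬝ᵥ S.mulVec (fun l => ∑ i, u (f i) l * c i)).re
      = ∑ i, t (f i) * ‖c i‖^2 := by
  rw [mulVec_comb S t u heig f c, dot_comb u horth f hf]
  have h2 : ∑ i, star (c i) * ((t (f i) : ℍ[ℝ]) * c i)
      = ((∑ i, t (f i) * ‖c i‖^2 : ℝ) : ℍ[ℝ]) := by
    rw [quat_coe_sum]; exact Finset.sum_congr rfl fun i _ => star_coe_mul _ _
  rw [h2, Quaternion.re_coe]
end core

theorem courant_fischer_min_max {n : ℕ}
    (S : Matrix (Fin n) (Fin n) ℍ[ℝ]) (hS : S.IsHermitian)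
    (t : Fin n → ℝ) (ht : Monotone t) (u : Fin n → Fin n → ℍ[ℝ])
    (horth : ∀ i j, star (u i) ⬝ᵥ u j = if i = j then 1 else 0)
    (heig : ∀ j, S.mulVec (u j) = fun l => u j l * (t j : ℍ[ℝ]))
    (k : ℕ) (hk : 1 ≤ k) (hkn : k ≤ n) :
    IsLeast {m : ℝ | ∃ E : Submodule ℍ[ℝ]ᵐᵒᵖ (Fin n → ℍ[ℝ]),
        Module.finrank ℍ[ℝ]ᵐᵒᵖ E = k ∧
        IsGreatest {r : ℝ | ∃ v ∈ E, v ≠ 0 ∧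
          (star v ⬝ᵥ S.mulVec v).re / (∑ i, ‖v i‖ ^ 2) = r} m}
      (t ⟨k - 1, by omega⟩) := by
  classical
  have hκn : k - 1 < n := by omega
  show IsLeast _ (t ⟨k - 1, hκn⟩)
  set κ : Fin n := ⟨k - 1, hκn⟩ with hκdef
  haveI : FiniteDimensional ℍ[ℝ]ᵐᵒᵖ (Fin n → ℍ[ℝ]) :=
    Module.Finite.of_basis (opBasis n)
  have htop : Module.finrank ℍ[ℝ]ᵐᵒᵖ (Fin n → ℍ[ℝ]) = n := by
    rw [Module.finrank_eq_card_basis (opBasis n), Fintype.card_fin]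
  have liu : LinearIndependent ℍ[ℝ]ᵐᵒᵖ u := by
    rw [Fintype.linearIndependent_iff]
    intro g hg i
    have hv : (fun l => ∑ j, u j l * unop (g j)) = 0 := by
      funext l
      have h := congrFun hg l
      simpa [Finset.sum_apply] using h
    have h0 : ∑ j, ‖unop (g j)‖^2 = 0 := by
      have h := normsum_comb u horth id Function.injective_id (fun j => unop (g j))
      rw [← h]
      refine Finset.sum_eq_zero fun l _ => ?_
      have h2 := congrFun hv l
      simp only [id_eq]
      rw [h2]
      simp
    have h3 := (Finset.sum_eq_zero_iff_of_nonneg (fun j _ => sq_nonneg _)).mp h0 i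
      (Finset.mem_univ i)
    rw [← unop_eq_zero_iff]
    have : ‖unop (g i)‖ = 0 := by
      have := sq_eq_zero_iff.mp h3; exact this
    exact norm_eq_zero.mp this
  have rep : ∀ {m : ℕ} (f : Fin m → Fin n) (v : Fin n → ℍ[ℝ]),
      v ∈ Submodule.span ℍ[ℝ]ᵐᵒᵖ (Set.range (fun i => u (f i))) →
      ∃ c : Fin m → ℍ[ℝ], v = fun l => ∑ i, u (f i) l * c i := by
    intro m f v hv
    rw [Submodule.mem_span_range_iff_exists_fun] at hv
    obtain ⟨cop, hc⟩ := hv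
    refine ⟨fun i => unop (cop i), ?_⟩
    rw [← hc]; funext l
    rw [Finset.sum_apply]
    rfl
  have denpos : ∀ v : Fin n → ℍ[ℝ], v ≠ 0 → 0 < ∑ l, ‖v l‖^2 := by
    intro v hv
    obtain ⟨l, hl⟩ : ∃ l, v l ≠ 0 := by
      by_contra h; push_neg at h; exact hv (funext h)
    exact Finset.sum_pos' (fun i _ => sq_nonneg _)
      ⟨l, Finset.mem_univ l, pow_pos (norm_pos_iff.mpr hl) 2⟩
  constructor
  · -- membership
    refine ⟨Submodule.span ℍ[ℝ]ᵐᵒᵖ (Set.range (fun i : Fin k => u (Fin.castLE hkn i))),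
      ?_, ?_, ?_⟩
    · have h := finrank_span_eq_card (liu.comp (Fin.castLE hkn) (Fin.castLE_injective hkn))
      rw [Fintype.card_fin] at h
      exact h
    · -- t κ is attained at u κ
      refine ⟨u κ, Submodule.subset_span ⟨⟨k-1, by omega⟩, rfl⟩, ?_, ?_⟩
      · intro h0
        have h1 := horth κ κ
        rw [h0] at h1
        simp at h1
      · have hden : (∑ l, ‖u κ l‖^2) = 1 := by
          have h := dot_self_eq (u κ)
          rw [horth κ κ, if_pos rfl] at h
          have := Quaternion.coe_injective (h.symm.trans (Quaternion.coe_one).symm)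
          exact this
        have hnum : (star (u κ) ⬝ᵥ S.mulVec (u κ)).re = t κ := by
          rw [heig κ]
          have h : star (u κ) ⬝ᵥ (fun l => u κ l * (t κ : ℍ[ℝ]))
              = (star (u κ) ⬝ᵥ u κ) * (t κ : ℍ[ℝ]) := by
            simp only [dotProduct, Pi.star_apply, Finset.sum_mul, mul_assoc]
          rw [h, horth κ κ, if_pos rfl, one_mul, Quaternion.re_coe]
        rw [hnum, hden, div_one]
    · -- upper bound over E₀
      rintro r ⟨v, hvE, hv0, hr⟩
      obtain ⟨c, hc⟩ := rep (Fin.castLE hkn) v hvE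
      subst hc
      have hdenc : 0 < ∑ i, ‖c i‖^2 := by
        rw [← normsum_comb u horth _ (Fin.castLE_injective hkn) c]
        exact denpos _ hv0
      rw [← hr, num_comb S t u horth heig _ (Fin.castLE_injective hkn) c,
        normsum_comb u horth _ (Fin.castLE_injective hkn) c, div_le_iff₀ hdenc]
      calc ∑ i, t (Fin.castLE hkn i) * ‖c i‖^2
          ≤ ∑ i, t κ * ‖c i‖^2 := by
            refine Finset.sum_le_sum fun i _ => mul_le_mul_of_nonneg_right
              (ht ?_) (sq_nonneg _)
            simp only [Fin.le_def, hκdef, Fin.coe_castLE]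
            omega
        _ = t κ * ∑ i, ‖c i‖^2 := (Finset.mul_sum _ _ _).symm
  · -- lower bound
    rintro r ⟨E, hEk, hGr⟩
    have hgdef : ∀ i : Fin (n - (k-1)), k - 1 + i.val < n := fun i => by omega
    set g : Fin (n - (k-1)) → Fin n := fun i => ⟨k - 1 + i.val, hgdef i⟩ with hg
    have hginj : Function.Injective g := by
      intro a b hab
      simp only [hg, Fin.mk.injEq] at hab
      exact Fin.ext (by omega)
    set F := Submodule.span ℍ[ℝ]ᵐᵒᵖ (Set.range (fun i => u (g i))) with hF
    have hFr : Module.finrank ℍ[ℝ]ᵐᵒᵖ F = n - (k-1) := by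
      have h := finrank_span_eq_card (liu.comp g hginj)
      rw [Fintype.card_fin] at h
      exact h
    have hsum := Submodule.finrank_sup_add_finrank_inf_eq E F
    have hle : Module.finrank ℍ[ℝ]ᵐᵒᵖ ↥(E ⊔ F) ≤ n := le_trans (Submodule.finrank_le _) (le_of_eq htop)
    have hne : E ⊓ F ≠ ⊥ := by
      intro hbot
      rw [hbot, finrank_bot, hEk, hFr] at hsum
      omega
    obtain ⟨v, hv, hv0⟩ := Submodule.exists_mem_ne_zero_of_ne_bot hne
    have hvE := (Submodule.mem_inf.mp hv).1
    obtain ⟨c, hc⟩ := rep g v ((Submodule.mem_inf.mp hv).2)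
    subst hc
    refine le_trans ?_ (hGr.2 ⟨_, hvE, hv0, rfl⟩)
    have hdenc : 0 < ∑ i, ‖c i‖^2 := by
      rw [← normsum_comb u horth g hginj c]
      exact denpos _ hv0
    rw [num_comb S t u horth heig g hginj c, normsum_comb u horth g hginj c,
      le_div_iff₀ hdenc]
    calc t κ * ∑ i, ‖c i‖^2 = ∑ i, t κ * ‖c i‖^2 := Finset.mul_sum _ _ _
      _ ≤ ∑ i, t (g i) * ‖c i‖^2 := by
          refine Finset.sum_le_sum fun i _ => mul_le_mul_of_nonneg_right
            (ht ?_) (sq_nonneg _)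
          simp only [Fin.le_def, hκdef, hg]
          omega
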